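/- Let F be a field and x_1, …, x_n nonzero pairwise distinct elements of F, and let 𝒞_r be the linear code of length n over F generated by r consecutive rows r_1, r_1+1, …, r_1+r−1 of the Vandermonde-type matrix V(x_1,…,x_n) (with r_1 + r − 1 ≤ n−1 and 1 ≤ r ≤ n). Then these r rows are linearly independent and every nonzero codeword of 𝒞_r has Hamming weight at least n − r + 1; that is, 𝒞_r is an MDS (n, r, n−r+1) code. -/

import Mathlib

/-- The Hamming weight of a vector: the number of its nonzero coordinates. -/
noncomputable def hammingWt {n : ℕ} {F : Type*} [Zero F] (v : Fin n → F) : ℕ :=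
  Nat.card {j : Fin n // v j ≠ 0}

open Polynomial

/-- Let `x_1, …, x_n` be nonzero pairwise distinct elements of a
field `F` and let `𝒞_r` be the linear code of length `n` generated by the `r`
consecutive rows `r1, r1+1, …, r1+r-1` of the Vandermonde-type matrix
`V(x_1,…,x_n)` (with `r1 + r - 1 ≤ n - 1` and `1 ≤ r ≤ n`).  Then these `r` rows
are linearly independent and every nonzero codeword has Hamming weight at least
`n - r + 1`: `𝒞_r` is an MDS `(n, r, n-r+1)` code. -/
theorem vandermonde_consecutive_rows_code_mds {F : Type*} [Field F]
    (n r r1 : ℕ) (hr : 1 ≤ r) (hrn : r ≤ n) (hrow : r1 + r - 1 ≤ n - 1)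
    (x : Fin n → F) (hx0 : ∀ j, x j ≠ 0) (hxinj : Function.Injective x) :
    LinearIndependent F (fun l : Fin r => fun j : Fin n => x j ^ (r1 + (l : ℕ))) ∧
      ∀ c ∈ Submodule.span F
          (Set.range fun l : Fin r => fun j : Fin n => x j ^ (r1 + (l : ℕ))),
        c ≠ 0 → n - r + 1 ≤ hammingWt c := by
  classical
  set P : (Fin r → F) → F[X] := fun a => ∑ l : Fin r, monomial (l : ℕ) (a l) with hP
  have hdeg : ∀ a : Fin r → F, (P a).natDegree < r := by
    intro a
    by_cases h0 : P a = 0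
    · simpa [h0] using (show 0 < r by omega)
    rw [Polynomial.natDegree_lt_iff_degree_lt h0]
    refine lt_of_le_of_lt (Polynomial.degree_sum_le _ _) ?_
    rw [Finset.sup_lt_iff (by exact_mod_cast WithBot.bot_lt_coe r)]
    intro l _
    exact lt_of_le_of_lt (Polynomial.degree_monomial_le _ _)
      (by exact_mod_cast l.isLt)
  have hcoeff : ∀ (a : Fin r → F) (k : Fin r), (P a).coeff (k : ℕ) = a k := by
    intro a k
    rw [hP]
    simp only [Polynomial.finset_sum_coeff, Polynomial.coeff_monomial]
    rw [Finset.sum_eq_single k (fun l _ hl => by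
      rw [if_neg (fun h => hl (Fin.ext h))]) (by simp)]
    simp
  have heval : ∀ (a : Fin r → F) (j : Fin n),
      (∑ l : Fin r, a l • (fun j : Fin n => x j ^ (r1 + (l : ℕ)))) j
        = x j ^ r1 * (P a).eval (x j) := by
    intro a j
    simp only [Finset.sum_apply, Pi.smul_apply, smul_eq_mul, hP,
      Polynomial.eval_finset_sum, Polynomial.eval_monomial, Finset.mul_sum]
    exact Finset.sum_congr rfl fun l _ => by rw [pow_add]; ring
  -- if all evaluations vanish then a = 0
  have hzero : ∀ a : Fin r → F,
      (∑ l : Fin r, a l • (fun j : Fin n => x j ^ (r1 + (l : ℕ)))) = 0 → a = 0 := by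
    intro a ha
    have hp0 : P a = 0 := by
      apply Polynomial.eq_zero_of_natDegree_lt_card_of_eval_eq_zero (P a) hxinj
      · intro j
        have := congrFun ha j
        rw [heval a j] at this
        simpa [pow_ne_zero _ (hx0 j)] using this
      · calc (P a).natDegree < r := hdeg a
          _ ≤ n := hrn
          _ = Fintype.card (Fin n) := (Fintype.card_fin n).symm
    funext k
    have := hcoeff a k
    rw [hp0] at this
    simpa using this.symm
  constructor
  · rw [Fintype.linearIndependent_iff]
    intro g hg k
    exact congrFun (hzero g hg) k
  · intro c hc hc0
    obtain ⟨a, ha⟩ := Submodule.mem_span_range_iff_exists_fun F |>.mp hc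
    have hpne : P a ≠ 0 := by
      intro h
      apply hc0
      rw [← ha]
      funext j
      rw [heval a j, h]
      simp
    -- zero set of c
    have hceval : ∀ j, c j = 0 ↔ (P a).eval (x j) = 0 := by
      intro j
      rw [← ha, heval a j]
      simp [pow_ne_zero _ (hx0 j)]
    have hcard : (Finset.univ.filter fun j : Fin n => c j = 0).card ≤ r - 1 := by
      have hsub : (Finset.univ.filter fun j : Fin n => c j = 0).image x
          ⊆ (P a).roots.toFinset := by
        intro t ht
        obtain ⟨j, hj, rfl⟩ := Finset.mem_image.mp ht
        rw [Multiset.mem_toFinset, Polynomial.mem_roots hpne]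
        exact (hceval j).mp (Finset.mem_filter.mp hj).2
      calc (Finset.univ.filter fun j : Fin n => c j = 0).card
          = ((Finset.univ.filter fun j : Fin n => c j = 0).image x).card :=
            (Finset.card_image_of_injective _ hxinj).symm
        _ ≤ (P a).roots.toFinset.card := Finset.card_le_card hsub
        _ ≤ Multiset.card (P a).roots := Multiset.toFinset_card_le _
        _ ≤ (P a).natDegree := Polynomial.card_roots' _
        _ ≤ r - 1 := by have := hdeg a; omega
    have hwt : hammingWt c = (Finset.univ.filter fun j : Fin n => c j ≠ 0).card := by
      rw [hammingWt, Nat.card_eq_fintype_card, Fintype.card_subtype]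
    have hsplit := Finset.card_filter_add_card_filter_not
      (s := (Finset.univ : Finset (Fin n))) (p := fun j => c j = 0)
    simp only [Finset.card_univ, Fintype.card_fin] at hsplit
    have : (Finset.univ.filter fun j : Fin n => ¬ c j = 0).card
        = (Finset.univ.filter fun j : Fin n => c j ≠ 0).card := rfl
    omega
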